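/- Let (X₁, X₂) be a pair of symmetric random variables whose cumulative distribution functions F_{X_i} (i = 1, 2) are continuous and strictly increasing on (F_{X_i}^{-1+}(0), F_{X_i}^{-1}(1)), and suppose X₂ ≤_disp X₁. Then for every p ∈ (0,1), the counter-monotonic sum S⁻ satisfies WT_p[S⁻] = WT_p[X₁] + WT_{1−p}[X₂]. -/

import Mathlib

open MeasureTheory ProbabilityTheory Set

noncomputable section

variable {Ω : Type*} [MeasurableSpace Ω]

/-- The cumulative distribution function of the random variable `X` under `P`. -/
def rvCdf (P : Measure Ω) (X : Ω → ℝ) : ℝ → ℝ := fun x => (P {ω | X ω ≤ x}).toReal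

/-- The survival function `x ↦ P(X > x)`. -/
def rvSurv (P : Measure Ω) (X : Ω → ℝ) : ℝ → ℝ := fun x => (P {ω | x < X ω}).toReal

/-- The left inverse `F⁻¹(p) = inf {x | F x ≥ p}` of a cdf `F`. -/
def leftInv (F : ℝ → ℝ) (p : ℝ) : ℝ := sInf {x | p ≤ F x}

/-- The right inverse `F⁻¹⁺(p) = sup {x | F x ≤ p}` of a cdf `F`. -/
def rightInv (F : ℝ → ℝ) (p : ℝ) : ℝ := sSup {x | F x ≤ p}

/-- `g : [0,1] → [0,1]` is a distortion function: nondecreasing with `g 0 = 0`, `g 1 = 1`. -/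
def IsDistortion (g : ℝ → ℝ) : Prop :=
  MonotoneOn g (Icc 0 1) ∧ g 0 = 0 ∧ g 1 = 1 ∧ ∀ q ∈ Icc (0:ℝ) 1, g q ∈ Icc (0:ℝ) 1

/-- The dual distortion function `ḡ(q) = 1 - g(1 - q)`. -/
def dualDistortion (g : ℝ → ℝ) : ℝ → ℝ := fun q => 1 - g (1 - q)

/-- The distortion risk measure
`ρ_g[X] = -∫_{-∞}^0 (1 - g(P(X > x))) dx + ∫_0^∞ g(P(X > x)) dx`. -/
def rho (P : Measure Ω) (g : ℝ → ℝ) (X : Ω → ℝ) : ℝ :=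
  (- ∫ x in Iio (0:ℝ), (1 - g (rvSurv P X x))) + ∫ x in Ioi (0:ℝ), g (rvSurv P X x)

/-- The two integrals defining the distortion risk measure `ρ_g[X]` are finite. -/
def RhoFinite (P : Measure Ω) (g : ℝ → ℝ) (X : Ω → ℝ) : Prop :=
  IntegrableOn (fun x => 1 - g (rvSurv P X x)) (Iio (0:ℝ)) volume ∧
  IntegrableOn (fun x => g (rvSurv P X x)) (Ioi (0:ℝ)) volume

/-- `U` is uniformly distributed on `[0,1]`. -/
def IsUniform01 (P : Measure Ω) (U : Ω → ℝ) : Prop :=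
  Measurable U ∧ Measure.map U P = volume.restrict (Icc (0:ℝ) 1)

/-- The counter-monotonic sum `S⁻ = F_{X₁}⁻¹(U) + F_{X₂}⁻¹(1 - U)`. -/
def cmSum (P : Measure Ω) (X₁ X₂ : Ω → ℝ) (U : Ω → ℝ) : Ω → ℝ :=
  fun ω => leftInv (rvCdf P X₁) (U ω) + leftInv (rvCdf P X₂) (1 - U ω)

/-- `X` is symmetric: for some `m`, `P(X ≤ m - x) = P(X ≥ m + x)` for all `x`. -/
def IsSymmetricRV (P : Measure Ω) (X : Ω → ℝ) : Prop :=
  ∃ m : ℝ, ∀ x : ℝ, P {ω | X ω ≤ m - x} = P {ω | m + x ≤ X ω}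

/-- Dispersive order `X ≤_disp Y`. -/
def DispLE (P : Measure Ω) (X Y : Ω → ℝ) : Prop :=
  ∀ u v : ℝ, 0 < v → v ≤ u → u < 1 →
    leftInv (rvCdf P X) u - leftInv (rvCdf P X) v ≤
      leftInv (rvCdf P Y) u - leftInv (rvCdf P Y) v

/-- The cdf of `X` is continuous and strictly increasing on `(F⁻¹⁺(0), F⁻¹(1))`. -/
def CdfRegular (P : Measure Ω) (X : Ω → ℝ) : Prop :=
  ContinuousOn (rvCdf P X) (Ioo (rightInv (rvCdf P X) 0) (leftInv (rvCdf P X) 1)) ∧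
  StrictMonoOn (rvCdf P X) (Ioo (rightInv (rvCdf P X) 0) (leftInv (rvCdf P X) 1))

/-- Value-at-Risk `VaR_p[X] = F_X⁻¹(p)`. -/
def VaR (P : Measure Ω) (X : Ω → ℝ) (p : ℝ) : ℝ := leftInv (rvCdf P X) p

/-- Tail-Value-at-Risk `TVaR_p[X] = (1/(1-p)) ∫_p^1 F_X⁻¹(q) dq`. -/
def TVaR (P : Measure Ω) (X : Ω → ℝ) (p : ℝ) : ℝ :=
  (1 - p)⁻¹ * ∫ q in p..1, leftInv (rvCdf P X) q

/-- Left-Tail-Value-at-Risk `LTVaR_p[X] = (1/p) ∫_0^p F_X⁻¹(q) dq`. -/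
def LTVaR (P : Measure Ω) (X : Ω → ℝ) (p : ℝ) : ℝ :=
  p⁻¹ * ∫ q in (0:ℝ)..p, leftInv (rvCdf P X) q

/-- The standard normal cdf `Φ`. -/
def stdNormCdf : ℝ → ℝ := fun x => ((gaussianReal 0 1) (Iic x)).toReal

/-- The inverse `Φ⁻¹` of the standard normal cdf. -/
def stdNormInv : ℝ → ℝ := fun p => sInf {x | p ≤ stdNormCdf x}

/-- The Wang transform distortion function at level `p`. -/
def wangG (p : ℝ) : ℝ → ℝ := fun q => stdNormCdf (stdNormInv q + stdNormInv p)

/-- The Wang transform risk measure at level `p`. -/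
def WT (P : Measure Ω) (X : Ω → ℝ) (p : ℝ) : ℝ := rho P (wangG p) X

/-- `X ~ N(μ, σ²)`. -/
def IsNormalRV (P : Measure Ω) (X : Ω → ℝ) (μ σ : ℝ) : Prop :=
  Measurable X ∧ Measure.map X P = gaussianReal μ (⟨σ ^ 2, sq_nonneg σ⟩ : NNReal)

/-- `X ~ LN(μ, σ²)`, i.e. `X` is distributed as `exp Z` with `Z ~ N(μ, σ²)`. -/
def IsLogNormalRV (P : Measure Ω) (X : Ω → ℝ) (μ σ : ℝ) : Prop :=
  Measurable X ∧
    Measure.map X P = Measure.map Real.exp (gaussianReal μ (⟨σ ^ 2, sq_nonneg σ⟩ : NNReal))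

/-- `X ~ Student(ν)`: density proportional to `(1 + x²/ν)^(-(ν+1)/2)`. -/
def IsStudentRV (P : Measure Ω) (X : Ω → ℝ) (ν : ℝ) : Prop :=
  Measurable X ∧ ∃ c : ℝ, 0 < c ∧
    Measure.map X P =
      volume.withDensity (fun x => ENNReal.ofReal (c * (1 + x ^ 2 / ν) ^ (-((ν + 1) / 2))))

/-- Extension of a distortion function to `ℝ` by constants. -/
def gExt (g : ℝ → ℝ) : ℝ → ℝ := fun q => if q ≤ 0 then 0 else if 1 ≤ q then 1 else g q

open Classical in
/-- The Lebesgue–Stieltjes measure `dg` associated with (the right-continuous modification of)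
the extension of a distortion function `g` to `ℝ`. -/
def lsMeasure (g : ℝ → ℝ) : Measure ℝ :=
  if h : Monotone (gExt g) then h.stieltjesFunction.measure else 0


section CMWTAux
open Filter Topology

variable {Ω : Type*} [MeasurableSpace Ω]

/-! ### Basic cdf facts -/

lemma rvCdf_nonneg (P : Measure Ω) (X : Ω → ℝ) (x : ℝ) : 0 ≤ rvCdf P X x :=
  ENNReal.toReal_nonneg

lemma rvCdf_le_one (P : Measure Ω) [IsProbabilityMeasure P] (X : Ω → ℝ) (x : ℝ) :
    rvCdf P X x ≤ 1 := by
  have h := prob_le_one (μ := P) (s := {ω | X ω ≤ x})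
  exact ENNReal.toReal_le_of_le_ofReal zero_le_one (by simpa [ENNReal.ofReal_one] using h)

lemma rvCdf_mono (P : Measure Ω) [IsProbabilityMeasure P] (X : Ω → ℝ) :
    Monotone (rvCdf P X) := by
  intro x y hxy
  exact ENNReal.toReal_mono (measure_ne_top P _)
    (measure_mono fun ω (hω : X ω ≤ x) => le_trans hω hxy)

lemma rvCdf_add_rvSurv (P : Measure Ω) [IsProbabilityMeasure P] {X : Ω → ℝ}
    (hX : Measurable X) (x : ℝ) : rvCdf P X x + rvSurv P X x = 1 := by
  have hms : MeasurableSet {ω | X ω ≤ x} := measurableSet_le hX measurable_const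
  have hcompl : {ω | x < X ω} = {ω | X ω ≤ x}ᶜ := by ext ω; simp [not_le]
  have h : P {ω | X ω ≤ x} + P {ω | x < X ω} = 1 := by
    rw [hcompl, measure_add_measure_compl hms, measure_univ]
  rw [rvCdf, rvSurv, ← ENNReal.toReal_add (measure_ne_top _ _) (measure_ne_top _ _), h,
    ENNReal.toReal_one]

lemma rvSurv_eq_one_sub (P : Measure Ω) [IsProbabilityMeasure P] {X : Ω → ℝ}
    (hX : Measurable X) (x : ℝ) : rvSurv P X x = 1 - rvCdf P X x := by
  linarith [rvCdf_add_rvSurv P hX x]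

lemma rvSurv_antitone (P : Measure Ω) [IsProbabilityMeasure P] (X : Ω → ℝ) :
    Antitone (rvSurv P X) := by
  intro x y hxy
  exact ENNReal.toReal_mono (measure_ne_top P _)
    (measure_mono fun ω (hω : y < X ω) => lt_of_le_of_lt hxy hω)

lemma rvSurv_nonneg (P : Measure Ω) (X : Ω → ℝ) (x : ℝ) : 0 ≤ rvSurv P X x :=
  ENNReal.toReal_nonneg

lemma rvSurv_le_one (P : Measure Ω) [IsProbabilityMeasure P] (X : Ω → ℝ) (x : ℝ) :
    rvSurv P X x ≤ 1 := by
  have h := prob_le_one (μ := P) (s := {ω | x < X ω})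
  exact ENNReal.toReal_le_of_le_ofReal zero_le_one (by simpa [ENNReal.ofReal_one] using h)

lemma exists_rvCdf_lt (P : Measure Ω) [IsProbabilityMeasure P] {X : Ω → ℝ}
    (hX : Measurable X) {u : ℝ} (hu : 0 < u) : ∃ z : ℝ, rvCdf P X z < u := by
  by_contra hcon
  push_neg at hcon
  set s : ℕ → Set Ω := fun n => {ω | X ω ≤ -(n : ℝ)} with hs
  have hanti : Antitone s := by
    intro n m hnm ω hω
    have hω' : X ω ≤ -(m : ℝ) := hω
    have hc : (n : ℝ) ≤ m := by exact_mod_cast hnm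
    show X ω ≤ -(n : ℝ)
    linarith
  have hnull : ∀ n, NullMeasurableSet (s n) P :=
    fun n => (measurableSet_le hX measurable_const).nullMeasurableSet
  have hint : ⋂ n, s n = ∅ := by
    ext ω
    simp only [mem_iInter, mem_empty_iff_false, iff_false, not_forall]
    obtain ⟨n, hn⟩ := exists_nat_gt (-X ω)
    exact ⟨n, by simp only [hs, mem_setOf_eq, not_le]; linarith⟩
  have hkey := hanti.measure_iInter hnull ⟨0, measure_ne_top _ _⟩
  rw [hint, measure_empty] at hkey
  have hle : ENNReal.ofReal u ≤ ⨅ n, P (s n) :=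
    le_iInf fun n => ENNReal.ofReal_le_of_le_toReal (hcon _)
  rw [← hkey] at hle
  simp only [nonpos_iff_eq_zero, ENNReal.ofReal_eq_zero] at hle
  linarith

lemma exists_lt_rvCdf (P : Measure Ω) [IsProbabilityMeasure P] {X : Ω → ℝ}
    (hX : Measurable X) {u : ℝ} (hu : u < 1) : ∃ z : ℝ, u < rvCdf P X z := by
  by_contra hcon
  push_neg at hcon
  have hu0 : 0 ≤ u := le_trans (rvCdf_nonneg P X 0) (hcon 0)
  set s : ℕ → Set Ω := fun n => {ω | X ω ≤ (n : ℝ)} with hs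
  have hmono : Monotone s := by
    intro n m hnm ω hω
    have hω' : X ω ≤ (n : ℝ) := hω
    have hc : (n : ℝ) ≤ m := by exact_mod_cast hnm
    show X ω ≤ (m : ℝ)
    linarith
  have huni : ⋃ n, s n = univ := by
    ext ω
    simp only [mem_iUnion, mem_univ, iff_true]
    obtain ⟨n, hn⟩ := exists_nat_gt (X ω)
    exact ⟨n, hn.le⟩
  have hkey := hmono.measure_iUnion (μ := P)
  rw [huni, measure_univ] at hkey
  have hle : (⨆ n, P (s n)) ≤ ENNReal.ofReal u := by
    refine iSup_le fun n => ?_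
    rw [← ENNReal.ofReal_toReal (measure_ne_top P (s n))]
    exact ENNReal.ofReal_le_ofReal (hcon _)
  rw [← hkey] at hle
  have : (1 : ℝ) ≤ u := ENNReal.one_le_ofReal.mp hle
  linarith

lemma le_rvCdf_of_forall_lt (P : Measure Ω) [IsProbabilityMeasure P] {X : Ω → ℝ}
    (hX : Measurable X) {u x : ℝ} (h : ∀ y, x < y → u ≤ rvCdf P X y) :
    u ≤ rvCdf P X x := by
  rcases le_or_gt u 0 with h0 | h0
  · exact le_trans h0 (rvCdf_nonneg P X x)
  set s : ℕ → Set Ω := fun n => {ω | X ω ≤ x + 1 / (n + 1)} with hs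
  have hanti : Antitone s := by
    intro n m hnm ω hω
    have hω' : X ω ≤ x + 1 / (m + 1) := hω
    have hc : (1:ℝ) / (m+1) ≤ 1 / (n+1) := by
      apply one_div_le_one_div_of_le (by positivity)
      have : (n:ℝ) ≤ m := by exact_mod_cast hnm
      linarith
    show X ω ≤ x + 1 / (n + 1)
    linarith
  have hnull : ∀ n, NullMeasurableSet (s n) P :=
    fun n => (measurableSet_le hX measurable_const).nullMeasurableSet
  have hint : ⋂ n, s n = {ω | X ω ≤ x} := by
    ext ω
    simp only [mem_iInter, mem_setOf_eq, hs]
    constructor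
    · intro hall
      by_contra hxX
      push_neg at hxX
      obtain ⟨n, hn⟩ := exists_nat_one_div_lt (sub_pos.mpr hxX)
      have := hall n
      linarith
    · intro hle n
      have : (0:ℝ) < 1 / (n + 1) := by positivity
      linarith
  have hkey := hanti.measure_iInter hnull ⟨0, measure_ne_top _ _⟩
  rw [hint] at hkey
  have hle : ENNReal.ofReal u ≤ P {ω | X ω ≤ x} := by
    rw [hkey]
    refine le_iInf fun n => ENNReal.ofReal_le_of_le_toReal ?_
    exact h _ (lt_add_of_pos_right x (by positivity))
  have := ENNReal.toReal_mono (measure_ne_top P _) hle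
  rwa [ENNReal.toReal_ofReal h0.le] at this

/-! ### Galois connection for the left inverse -/

lemma leftInv_le_iff (P : Measure Ω) [IsProbabilityMeasure P] {X : Ω → ℝ}
    (hX : Measurable X) {u x : ℝ} (hu : u ∈ Ioo (0:ℝ) 1) :
    leftInv (rvCdf P X) u ≤ x ↔ u ≤ rvCdf P X x := by
  set F := rvCdf P X with hF
  have hne : {y | u ≤ F y}.Nonempty :=
    (exists_lt_rvCdf P hX hu.2).imp fun z hz => hz.le
  have hbdd : BddBelow {y | u ≤ F y} := by
    obtain ⟨z, hz⟩ := exists_rvCdf_lt P hX hu.1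
    refine ⟨z, fun y hy => le_of_not_gt fun hlt => ?_⟩
    exact absurd (le_trans hy (rvCdf_mono P X hlt.le)) (not_le.mpr hz)
  constructor
  · intro hle
    refine le_rvCdf_of_forall_lt P hX fun y hy => ?_
    obtain ⟨t, ht, hty⟩ := exists_lt_of_csInf_lt hne (lt_of_le_of_lt hle hy)
    exact le_trans ht (rvCdf_mono P X hty.le)
  · intro hle
    exact csInf_le hbdd hle

lemma lt_leftInv_iff (P : Measure Ω) [IsProbabilityMeasure P] {X : Ω → ℝ}
    (hX : Measurable X) {u x : ℝ} (hu : u ∈ Ioo (0:ℝ) 1) :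
    x < leftInv (rvCdf P X) u ↔ rvCdf P X x < u := by
  rw [← not_le, ← not_le]
  exact not_congr (leftInv_le_iff P hX hu)

lemma leftInv_monotoneOn (P : Measure Ω) [IsProbabilityMeasure P] {X : Ω → ℝ}
    (hX : Measurable X) : MonotoneOn (leftInv (rvCdf P X)) (Ioo (0:ℝ) 1) := by
  intro u hu v hv huv
  have hbdd : BddBelow {y | u ≤ rvCdf P X y} := by
    obtain ⟨z, hz⟩ := exists_rvCdf_lt P hX hu.1
    refine ⟨z, fun y hy => le_of_not_gt fun hlt => ?_⟩
    exact absurd (le_trans hy (rvCdf_mono P X hlt.le)) (not_le.mpr hz)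
  have hne : {y | v ≤ rvCdf P X y}.Nonempty :=
    (exists_lt_rvCdf P hX hv.2).imp fun z hz => hz.le
  exact csInf_le_csInf hbdd hne fun y hy => le_trans huv hy

end CMWTAux
section CMWTUpset
open Filter Topology

/-- Survival function of a function on `(0,1)` w.r.t. Lebesgue measure. -/
def survIoo (w : ℝ → ℝ) (x : ℝ) : ℝ :=
  (volume {u : ℝ | u ∈ Ioo (0:ℝ) 1 ∧ x < w u}).toReal

lemma upset_sandwich {w : ℝ → ℝ} (hw : MonotoneOn w (Ioo 0 1)) (x : ℝ) :
    ∃ a ∈ Icc (0:ℝ) 1, Ioo a 1 ⊆ {u : ℝ | u ∈ Ioo (0:ℝ) 1 ∧ x < w u} ∧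
      {u : ℝ | u ∈ Ioo (0:ℝ) 1 ∧ x < w u} ⊆ Ico a 1 := by
  set T := {u : ℝ | u ∈ Ioo (0:ℝ) 1 ∧ x < w u} with hT
  rcases T.eq_empty_or_nonempty with hemp | hne
  · exact ⟨1, ⟨zero_le_one, le_refl 1⟩, by simp [hemp], by simp [hemp]⟩
  · have hbdd : BddBelow T := ⟨0, fun t ht => ht.1.1.le⟩
    refine ⟨sInf T, ⟨le_csInf hne fun t ht => ht.1.1.le, ?_⟩, ?_, ?_⟩
    · obtain ⟨t, ht⟩ := hne
      exact le_trans (csInf_le hbdd ht) ht.1.2.le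
    · intro u hu
      obtain ⟨t, htT, htu⟩ := exists_lt_of_csInf_lt hne hu.1
      have huI : u ∈ Ioo (0:ℝ) 1 := ⟨lt_trans htT.1.1 htu, hu.2⟩
      exact ⟨huI, lt_of_lt_of_le htT.2 (hw htT.1 huI htu.le)⟩
    · intro t ht
      exact ⟨csInf_le hbdd ht, ht.1.2⟩

lemma upset_measurable {w : ℝ → ℝ} (hw : MonotoneOn w (Ioo 0 1)) (x : ℝ) :
    MeasurableSet {u : ℝ | u ∈ Ioo (0:ℝ) 1 ∧ x < w u} := by
  obtain ⟨a, _, h1, h2⟩ := upset_sandwich hw x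
  have hdecomp : {u : ℝ | u ∈ Ioo (0:ℝ) 1 ∧ x < w u} =
      Ioo a 1 ∪ ({u : ℝ | u ∈ Ioo (0:ℝ) 1 ∧ x < w u} ∩ {a}) := by
    ext u
    constructor
    · intro hu
      rcases eq_or_lt_of_le (h2 hu).1 with he | hlt
      · exact Or.inr ⟨hu, he.symm⟩
      · exact Or.inl ⟨hlt, hu.1.2⟩
    · rintro (hu | ⟨hu, _⟩)
      exacts [h1 hu, hu]
  rw [hdecomp]
  exact measurableSet_Ioo.union
    (((Set.countable_singleton a).mono inter_subset_right).measurableSet)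

lemma upset_volume_ne_top (w : ℝ → ℝ) (x : ℝ) :
    volume {u : ℝ | u ∈ Ioo (0:ℝ) 1 ∧ x < w u} ≠ ⊤ := by
  refine ne_top_of_le_ne_top ?_ (measure_mono fun u hu => hu.1)
  rw [Real.volume_Ioo]
  exact ENNReal.ofReal_ne_top

lemma volume_upset_eq_ofReal (w : ℝ → ℝ) (x : ℝ) :
    volume {u : ℝ | u ∈ Ioo (0:ℝ) 1 ∧ x < w u} = ENNReal.ofReal (survIoo w x) :=
  (ENNReal.ofReal_toReal (upset_volume_ne_top w x)).symm

lemma survIoo_nonneg (w : ℝ → ℝ) (x : ℝ) : 0 ≤ survIoo w x := ENNReal.toReal_nonneg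

lemma survIoo_le_one (w : ℝ → ℝ) (x : ℝ) : survIoo w x ≤ 1 := by
  have h : volume {u : ℝ | u ∈ Ioo (0:ℝ) 1 ∧ x < w u} ≤ volume (Ioo (0:ℝ) 1) :=
    measure_mono fun u hu => hu.1
  rw [Real.volume_Ioo] at h
  have := ENNReal.toReal_mono ENNReal.ofReal_ne_top h
  rwa [ENNReal.toReal_ofReal (by norm_num : (0:ℝ) ≤ 1 - 0), sub_zero] at this

lemma survIoo_eq_of_sandwich {w : ℝ → ℝ} {x a : ℝ} (ha : a ∈ Icc (0:ℝ) 1)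
    (h1 : Ioo a 1 ⊆ {u : ℝ | u ∈ Ioo (0:ℝ) 1 ∧ x < w u})
    (h2 : {u : ℝ | u ∈ Ioo (0:ℝ) 1 ∧ x < w u} ⊆ Ico a 1) :
    survIoo w x = 1 - a := by
  have hv : volume {u : ℝ | u ∈ Ioo (0:ℝ) 1 ∧ x < w u} = ENNReal.ofReal (1 - a) := by
    refine le_antisymm ?_ ?_
    · have hm : volume {u : ℝ | u ∈ Ioo (0:ℝ) 1 ∧ x < w u} ≤ volume (Ico a 1) :=
        measure_mono h2
      rwa [Real.volume_Ico] at hm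
    · have hm : volume (Ioo a 1) ≤ volume {u : ℝ | u ∈ Ioo (0:ℝ) 1 ∧ x < w u} :=
        measure_mono h1
      rwa [Real.volume_Ioo] at hm
  rw [survIoo, hv, ENNReal.toReal_ofReal (by linarith [ha.2])]

/-! ### The fundamental integral identity for monotone functions on (0,1) -/

lemma monotoneOn_integral_eq (w : ℝ → ℝ) (hw : MonotoneOn w (Ioo 0 1))
    (h1 : IntegrableOn (fun x => 1 - survIoo w x) (Iio (0:ℝ)) volume)
    (h2 : IntegrableOn (fun x => survIoo w x) (Ioi (0:ℝ)) volume) :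
    IntegrableOn w (Ioo (0:ℝ) 1) volume ∧
      ∫ u in Ioo (0:ℝ) 1, w u =
        (- ∫ x in Iio (0:ℝ), (1 - survIoo w x)) + ∫ x in Ioi (0:ℝ), survIoo w x := by
  set μ := volume.restrict (Ioo (0:ℝ) 1) with hμ
  set wt : ℝ → ℝ := fun u => if u ∈ Ioo (0:ℝ) 1 then w u else 0 with hwt
  have hwt_meas : Measurable wt := by
    apply measurable_of_Ioi
    intro t
    have hset : wt ⁻¹' Ioi t =
        {u : ℝ | u ∈ Ioo (0:ℝ) 1 ∧ t < w u} ∪ (if t < 0 then (Ioo (0:ℝ) 1)ᶜ else ∅) := by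
      ext u
      constructor
      · intro h
        have h' : t < (if u ∈ Ioo (0:ℝ) 1 then w u else 0) := h
        by_cases hu : u ∈ Ioo (0:ℝ) 1
        · rw [if_pos hu] at h'
          exact Or.inl ⟨hu, h'⟩
        · rw [if_neg hu] at h'
          right
          rw [if_pos h']
          exact hu
      · intro h
        show t < (if u ∈ Ioo (0:ℝ) 1 then w u else 0)
        rcases h with ⟨hu, hlt⟩ | hmem
        · rw [if_pos hu]
          exact hlt
        · split_ifs at hmem with ht
          · rw [if_neg hmem]
            exact ht
          · exact absurd hmem (notMem_empty u)
    rw [hset]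
    refine (upset_measurable hw t).union ?_
    split_ifs
    exacts [measurableSet_Ioo.compl, MeasurableSet.empty]
  -- positive part
  set pp : ℝ → ℝ := fun u => max (wt u) 0 with hpp
  have hpp_meas : Measurable pp := hwt_meas.max measurable_const
  have hpp_nn : 0 ≤ᵐ[μ] pp := ae_of_all _ fun u => le_max_right _ _
  have key1 : ∫⁻ u, ENNReal.ofReal (pp u) ∂μ = ∫⁻ t in Ioi (0:ℝ), μ {a | t < pp a} :=
    lintegral_eq_lintegral_meas_lt μ hpp_nn hpp_meas.aemeasurable
  have hmeas1 : ∀ t ∈ Ioi (0:ℝ), μ {a | t < pp a} = ENNReal.ofReal (survIoo w t) := by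
    intro t ht
    have htpos : (0:ℝ) < t := ht
    have hset : {a : ℝ | t < pp a} ∩ Ioo (0:ℝ) 1 = {u : ℝ | u ∈ Ioo (0:ℝ) 1 ∧ t < w u} := by
      ext u
      simp only [mem_inter_iff, mem_setOf_eq]
      constructor
      · rintro ⟨hpu, hu⟩
        refine ⟨hu, ?_⟩
        have hwtu : wt u = w u := if_pos hu
        have hmax : t < max (w u) 0 := by
          simpa only [hpp, hwtu] using hpu
        rcases lt_max_iff.mp hmax with h | h
        · exact h
        · linarith
      · rintro ⟨hu, hlt⟩
        refine ⟨?_, hu⟩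
        have hwtu : wt u = w u := if_pos hu
        show t < max (wt u) 0
        rw [hwtu]
        exact lt_max_iff.mpr (Or.inl hlt)
    rw [Measure.restrict_apply' measurableSet_Ioo, hset, volume_upset_eq_ofReal]
  have key1' : ∫⁻ u, ENNReal.ofReal (pp u) ∂μ =
      ENNReal.ofReal (∫ t in Ioi (0:ℝ), survIoo w t) := by
    rw [key1, setLIntegral_congr_fun measurableSet_Ioi hmeas1,
      ← ofReal_integral_eq_lintegral_ofReal h2 (ae_of_all _ fun t => survIoo_nonneg w t)]
  have hpp_int : Integrable pp μ :=
    ⟨hpp_meas.aestronglyMeasurable, (hasFiniteIntegral_iff_ofReal hpp_nn).mpr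
      (by rw [key1']; exact ENNReal.ofReal_lt_top)⟩
  have hI2_nn : 0 ≤ ∫ t in Ioi (0:ℝ), survIoo w t :=
    setIntegral_nonneg measurableSet_Ioi fun t _ => survIoo_nonneg w t
  have hpp_val : ∫ u, pp u ∂μ = ∫ t in Ioi (0:ℝ), survIoo w t := by
    rw [integral_eq_lintegral_of_nonneg_ae hpp_nn hpp_meas.aestronglyMeasurable, key1',
      ENNReal.toReal_ofReal hI2_nn]
  -- negative part
  set qq : ℝ → ℝ := fun u => max (-(wt u)) 0 with hqq
  have hqq_meas : Measurable qq := hwt_meas.neg.max measurable_const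
  have hqq_nn : 0 ≤ᵐ[μ] qq := ae_of_all _ fun u => le_max_right _ _
  have key2 : ∫⁻ u, ENNReal.ofReal (qq u) ∂μ = ∫⁻ t in Ioi (0:ℝ), μ {a | t ≤ qq a} :=
    lintegral_eq_lintegral_meas_le μ hqq_nn hqq_meas.aemeasurable
  have hmeas2 : ∀ t ∈ Ioi (0:ℝ), μ {a | t ≤ qq a} = ENNReal.ofReal (1 - survIoo w (-t)) := by
    intro t ht
    have htpos : (0:ℝ) < t := ht
    have hset : {a : ℝ | t ≤ qq a} ∩ Ioo (0:ℝ) 1 =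
        Ioo (0:ℝ) 1 \ {u : ℝ | u ∈ Ioo (0:ℝ) 1 ∧ -t < w u} := by
      ext u
      simp only [mem_inter_iff, mem_setOf_eq, mem_diff]
      constructor
      · rintro ⟨hqu, hu⟩
        have hwtu : wt u = w u := if_pos hu
        have h' : t ≤ max (-(w u)) 0 := by simpa only [hqq, hwtu] using hqu
        have hle : w u ≤ -t := by
          rcases max_cases (-(w u)) 0 with ⟨hm, _⟩ | ⟨hm, _⟩ <;> rw [hm] at h' <;> linarith
        exact ⟨hu, fun hc => absurd hc.2 (not_lt.mpr hle)⟩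
      · rintro ⟨hu, hnot⟩
        have hwtu : wt u = w u := if_pos hu
        have hle : w u ≤ -t := by
          by_contra hc
          exact hnot ⟨hu, lt_of_not_ge hc⟩
        refine ⟨?_, hu⟩
        show t ≤ max (-(wt u)) 0
        rw [hwtu]
        exact le_max_iff.mpr (Or.inl (by linarith))
    rw [Measure.restrict_apply' measurableSet_Ioo, hset,
      measure_diff (fun u hu => hu.1) (upset_measurable hw (-t)).nullMeasurableSet
        (upset_volume_ne_top w (-t)),
      Real.volume_Ioo, volume_upset_eq_ofReal, show (1:ℝ) - 0 = 1 by ring,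
      ← ENNReal.ofReal_sub 1 (survIoo_nonneg w (-t))]
  have hGneg_int : IntegrableOn (fun t : ℝ => 1 - survIoo w (-t)) (Ioi (0:ℝ)) volume := by
    have hpre : (Neg.neg ⁻¹' (Iio (0:ℝ)) : Set ℝ) = Ioi 0 := by
      ext x; simp only [mem_preimage, mem_Iio, mem_Ioi]; constructor <;> intro <;> linarith
    have := ((Measure.measurePreserving_neg (volume : Measure ℝ)).integrableOn_comp_preimage
      (Homeomorph.neg ℝ).measurableEmbedding).mpr h1
    rw [hpre] at this
    exact this
  have hGneg_eq : ∫ t in Ioi (0:ℝ), (1 - survIoo w (-t)) = ∫ x in Iio (0:ℝ), (1 - survIoo w x) := by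
    have := integral_comp_neg_Ioi (0:ℝ) (fun x => 1 - survIoo w x)
    rw [neg_zero] at this
    rw [this, integral_Iic_eq_integral_Iio]
  have key2' : ∫⁻ u, ENNReal.ofReal (qq u) ∂μ =
      ENNReal.ofReal (∫ x in Iio (0:ℝ), (1 - survIoo w x)) := by
    rw [key2, setLIntegral_congr_fun measurableSet_Ioi hmeas2,
      ← ofReal_integral_eq_lintegral_ofReal hGneg_int
        (ae_of_all _ fun t => sub_nonneg.mpr (survIoo_le_one w (-t))), hGneg_eq]
  have hqq_int : Integrable qq μ :=
    ⟨hqq_meas.aestronglyMeasurable, (hasFiniteIntegral_iff_ofReal hqq_nn).mpr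
      (by rw [key2']; exact ENNReal.ofReal_lt_top)⟩
  have hI1_nn : 0 ≤ ∫ x in Iio (0:ℝ), (1 - survIoo w x) :=
    setIntegral_nonneg measurableSet_Iio fun x _ => sub_nonneg.mpr (survIoo_le_one w x)
  have hqq_val : ∫ u, qq u ∂μ = ∫ x in Iio (0:ℝ), (1 - survIoo w x) := by
    rw [integral_eq_lintegral_of_nonneg_ae hqq_nn hqq_meas.aestronglyMeasurable, key2',
      ENNReal.toReal_ofReal hI1_nn]
  -- combine
  have hsub : (fun u => pp u - qq u) =ᵐ[μ] w := by
    rw [hμ]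
    refine (ae_restrict_iff' measurableSet_Ioo).mpr (ae_of_all _ fun u hu => ?_)
    have hwtu : wt u = w u := if_pos hu
    simp only [hpp, hqq, hwtu]
    exact max_zero_sub_max_neg_zero_eq_self (w u)
  have hw_int : Integrable w μ := (hpp_int.sub hqq_int).congr hsub
  refine ⟨hw_int, ?_⟩
  have : ∫ u, w u ∂μ = ∫ u, (pp u - qq u) ∂μ := (integral_congr_ae hsub).symm
  rw [show ∫ u in Ioo (0:ℝ) 1, w u = ∫ u, w u ∂μ from rfl, this,
    integral_sub hpp_int hqq_int, hpp_val, hqq_val]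
  ring

end CMWTUpset
section CMWTPhi
open Filter Topology Real

lemma stdNormCdf_eq_rvCdf : stdNormCdf = rvCdf (gaussianReal 0 1) id := rfl

lemma stdNormCdf_mono : Monotone stdNormCdf := by
  rw [stdNormCdf_eq_rvCdf]; exact rvCdf_mono _ id

lemma stdNormCdf_nonneg (x : ℝ) : 0 ≤ stdNormCdf x := ENNReal.toReal_nonneg

lemma stdNormCdf_le_one (x : ℝ) : stdNormCdf x ≤ 1 := by
  rw [stdNormCdf_eq_rvCdf]; exact rvCdf_le_one _ id x

lemma gaussian_Ioc_pos {x y : ℝ} (hxy : x < y) : 0 < gaussianReal 0 1 (Ioc x y) := by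
  rw [gaussianReal_apply 0 one_ne_zero]
  rcases eq_or_lt_of_le (show (0:ENNReal) ≤ ∫⁻ a in Ioc x y, gaussianPDF 0 1 a by simp) with h0 | hpos
  · exfalso
    have h0 : ∫⁻ a in Ioc x y, gaussianPDF 0 1 a = 0 := h0.symm
    rw [setLIntegral_eq_zero_iff measurableSet_Ioc (measurable_gaussianPDF 0 1)] at h0
    have hae : ∀ᵐ a ∂(volume : Measure ℝ), a ∉ Ioc x y := by
      filter_upwards [h0] with a ha hmem
      exact absurd (ha hmem) (ne_of_gt (gaussianPDF_pos 0 one_ne_zero a))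
    have hz : (volume : Measure ℝ) (Ioc x y) = 0 := measure_eq_zero_iff_ae_notMem.mpr hae
    rw [Real.volume_Ioc] at hz
    rw [ENNReal.ofReal_eq_zero] at hz
    linarith
  · exact hpos

lemma stdNormCdf_strictMono : StrictMono stdNormCdf := by
  intro x y hxy
  have hsplit : gaussianReal 0 1 (Iic y) =
      gaussianReal 0 1 (Iic x) + gaussianReal 0 1 (Ioc x y) := by
    rw [← measure_union (Iic_disjoint_Ioc le_rfl) measurableSet_Ioc, Iic_union_Ioc_eq_Iic hxy.le]
  have hpos := gaussian_Ioc_pos hxy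
  show stdNormCdf x < stdNormCdf y
  rw [stdNormCdf, stdNormCdf, hsplit,
    ENNReal.toReal_add (measure_ne_top _ _) (measure_ne_top _ _)]
  exact lt_add_of_pos_right _ (ENNReal.toReal_pos (ne_of_gt hpos) (measure_ne_top _ _))

lemma stdNormCdf_pos (x : ℝ) : 0 < stdNormCdf x := by
  have h1 : gaussianReal 0 1 (Ioc (x-1) x) ≤ gaussianReal 0 1 (Iic x) :=
    measure_mono Ioc_subset_Iic_self
  have h2 := gaussian_Ioc_pos (show x - 1 < x by linarith)
  exact lt_of_lt_of_le (ENNReal.toReal_pos (ne_of_gt h2) (measure_ne_top _ _))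
    (ENNReal.toReal_mono (measure_ne_top _ _) h1)

lemma stdNormCdf_lt_one (x : ℝ) : stdNormCdf x < 1 :=
  lt_of_lt_of_le (stdNormCdf_strictMono (show x < x + 1 by linarith)) (stdNormCdf_le_one (x+1))

lemma stdNormCdf_lipschitz_bound {x y : ℝ} (hxy : x ≤ y) :
    stdNormCdf y - stdNormCdf x ≤ (Real.sqrt (2 * π * ((1:NNReal):ℝ)))⁻¹ * (y - x) := by
  set C : ℝ := (Real.sqrt (2 * π * ((1:NNReal):ℝ)))⁻¹ with hC
  have hC0 : 0 ≤ C := by positivity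
  have hsplit : gaussianReal 0 1 (Iic y) =
      gaussianReal 0 1 (Iic x) + gaussianReal 0 1 (Ioc x y) := by
    rw [← measure_union (Iic_disjoint_Ioc le_rfl) measurableSet_Ioc, Iic_union_Ioc_eq_Iic hxy]
  have hbound : gaussianReal 0 1 (Ioc x y) ≤ ENNReal.ofReal (C * (y - x)) := by
    rw [gaussianReal_apply 0 one_ne_zero]
    have hle : ∀ a ∈ Ioc x y, gaussianPDF 0 1 a ≤ ENNReal.ofReal C := by
      intro a _
      refine ENNReal.ofReal_le_ofReal ?_
      rw [gaussianPDFReal]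
      simp only [NNReal.coe_one]
      refine mul_le_of_le_one_right (by positivity) ?_
      rw [Real.exp_le_one_iff]
      have : (0:ℝ) ≤ (a - 0)^2 / (2 * 1) := by positivity
      linarith
    calc ∫⁻ a in Ioc x y, gaussianPDF 0 1 a
        ≤ ∫⁻ _ in Ioc x y, ENNReal.ofReal C :=
          setLIntegral_mono measurable_const hle
      _ = ENNReal.ofReal C * volume (Ioc x y) := by
          rw [setLIntegral_const]
      _ = ENNReal.ofReal C * ENNReal.ofReal (y - x) := by rw [Real.volume_Ioc]
      _ = ENNReal.ofReal (C * (y - x)) := by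
          rw [← ENNReal.ofReal_mul hC0]
  have : stdNormCdf y - stdNormCdf x = (gaussianReal 0 1 (Ioc x y)).toReal := by
    rw [stdNormCdf, stdNormCdf, hsplit,
      ENNReal.toReal_add (measure_ne_top _ _) (measure_ne_top _ _)]
    ring
  rw [this]
  exact ENNReal.toReal_le_of_le_ofReal (by nlinarith) hbound

lemma stdNormCdf_continuous : Continuous stdNormCdf := by
  set C : ℝ := (Real.sqrt (2 * π * ((1:NNReal):ℝ)))⁻¹ with hC
  have hC0 : 0 ≤ C := by positivity
  have hlip : LipschitzWith (Real.toNNReal C) stdNormCdf := by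
    refine LipschitzWith.of_dist_le_mul fun x y => ?_
    have hcoe : ((Real.toNNReal C : NNReal) : ℝ) = C := Real.coe_toNNReal _ hC0
    rcases le_total x y with h | h
    · rw [Real.dist_eq, Real.dist_eq, abs_of_nonpos (by linarith [stdNormCdf_mono h]),
        abs_of_nonpos (by linarith), hcoe]
      have := stdNormCdf_lipschitz_bound h
      linarith
    · rw [Real.dist_eq, Real.dist_eq, abs_of_nonneg (by linarith [stdNormCdf_mono h]),
        abs_of_nonneg (by linarith), hcoe]
      have := stdNormCdf_lipschitz_bound h
      linarith
  exact hlip.continuous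

lemma stdNormCdf_stdNormInv {q : ℝ} (hq : q ∈ Ioo (0:ℝ) 1) :
    stdNormCdf (stdNormInv q) = q := by
  have hid : Measurable (id : ℝ → ℝ) := measurable_id
  obtain ⟨a, ha⟩ : ∃ a, stdNormCdf a < q := by
    rw [stdNormCdf_eq_rvCdf]; exact exists_rvCdf_lt _ hid hq.1
  obtain ⟨b, hb⟩ : ∃ b, q < stdNormCdf b := by
    rw [stdNormCdf_eq_rvCdf]; exact exists_lt_rvCdf _ hid hq.2
  have hab : a ≤ b := by
    by_contra hc
    push_neg at hc
    exact absurd (stdNormCdf_mono hc.le) (not_le.mpr (lt_trans ha hb))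
  obtain ⟨x0, _, hx0⟩ := intermediate_value_Icc hab stdNormCdf_continuous.continuousOn
    ⟨ha.le, hb.le⟩
  have hset : {x : ℝ | q ≤ stdNormCdf x} = Ici x0 := by
    ext z
    simp only [mem_setOf_eq, mem_Ici, ← hx0]
    exact stdNormCdf_strictMono.le_iff_le
  rw [stdNormInv, hset, csInf_Ici, hx0]

lemma stdNormInv_stdNormCdf (x : ℝ) : stdNormInv (stdNormCdf x) = x := by
  have hset : {z : ℝ | stdNormCdf x ≤ stdNormCdf z} = Ici x := by
    ext z
    simp only [mem_setOf_eq, mem_Ici]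
    exact stdNormCdf_strictMono.le_iff_le
  rw [stdNormInv, hset, csInf_Ici]

lemma gaussian_map_neg : (gaussianReal 0 1).map (fun y : ℝ => (-1 : ℝ) * y) = gaussianReal 0 1 := by
  rw [gaussianReal_map_const_mul]
  have h1 : (NNReal.mk ((-1:ℝ)^2) (sq_nonneg _)) * 1 = 1 := by
    ext; simp
  rw [h1]
  norm_num

lemma gaussian_singleton (x : ℝ) : gaussianReal 0 1 {x} = 0 := by
  rw [gaussianReal_apply 0 one_ne_zero]
  exact setLIntegral_measure_zero _ _ (Real.volume_singleton)

lemma stdNormCdf_neg (x : ℝ) : stdNormCdf (-x) = 1 - stdNormCdf x := by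
  have hIic : gaussianReal 0 1 (Iic (-x)) = gaussianReal 0 1 (Ici x) := by
    conv_lhs => rw [← gaussian_map_neg]
    have hm : Measurable (fun y : ℝ => (-1:ℝ) * y) := by fun_prop
    rw [Measure.map_apply hm measurableSet_Iic]
    congr 1
    ext y
    simp only [mem_preimage, mem_Iic, mem_Ici]
    constructor <;> intro h <;> nlinarith
  have hae : Ici x =ᵐ[gaussianReal 0 1] Ioi x := by
    rw [Filter.eventuallyEq_set]
    filter_upwards [measure_eq_zero_iff_ae_notMem.mp (gaussian_singleton x)] with y hy
    simp only [mem_Ici, mem_Ioi]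
    constructor
    · intro h
      rcases eq_or_lt_of_le h with he | hlt
      · exact absurd he.symm hy
      · exact hlt
    · exact le_of_lt
  have hsum : stdNormCdf x + (gaussianReal 0 1 (Ioi x)).toReal = 1 := by
    have := rvCdf_add_rvSurv (gaussianReal 0 1) (measurable_id) x
    exact this
  rw [stdNormCdf, hIic, measure_congr hae]
  linarith

lemma stdNormInv_one_sub {q : ℝ} (hq : q ∈ Ioo (0:ℝ) 1) :
    stdNormInv (1 - q) = - stdNormInv q := by
  have h1 : stdNormCdf (-(stdNormInv q)) = 1 - q := by
    rw [stdNormCdf_neg, stdNormCdf_stdNormInv hq]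
  rw [← h1, stdNormInv_stdNormCdf]

lemma stdNormInv_zero : stdNormInv 0 = 0 := by
  have hset : {x : ℝ | (0:ℝ) ≤ stdNormCdf x} = univ :=
    eq_univ_of_forall fun x => stdNormCdf_nonneg x
  rw [stdNormInv, hset]
  refine Real.sInf_of_not_bddBelow ?_
  rintro ⟨b, hb⟩
  have := hb (mem_univ (b - 1))
  linarith

lemma stdNormInv_one : stdNormInv 1 = 0 := by
  have hset : {x : ℝ | (1:ℝ) ≤ stdNormCdf x} = ∅ :=
    eq_empty_of_forall_notMem fun x hx => absurd hx (not_le.mpr (stdNormCdf_lt_one x))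
  rw [stdNormInv, hset, Real.sInf_empty]

lemma stdNormInv_strictMonoOn : StrictMonoOn stdNormInv (Ioo (0:ℝ) 1) := by
  intro u hu v hv huv
  by_contra hc
  push_neg at hc
  have := stdNormCdf_mono hc
  rw [stdNormCdf_stdNormInv hu, stdNormCdf_stdNormInv hv] at this
  linarith

lemma wangG_mem (p q : ℝ) : wangG p q ∈ Ioo (0:ℝ) 1 :=
  ⟨stdNormCdf_pos _, stdNormCdf_lt_one _⟩

lemma wangG_zero {p : ℝ} (hp : p ∈ Ioo (0:ℝ) 1) : wangG p 0 = p := by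
  rw [wangG, stdNormInv_zero, zero_add, stdNormCdf_stdNormInv hp]

lemma wangG_one {p : ℝ} (hp : p ∈ Ioo (0:ℝ) 1) : wangG p 1 = p := by
  rw [wangG, stdNormInv_one, zero_add, stdNormCdf_stdNormInv hp]

lemma wangG_monotoneOn (p : ℝ) : MonotoneOn (wangG p) (Ioo (0:ℝ) 1) := by
  intro u hu v hv huv
  rcases eq_or_lt_of_le huv with he | hlt
  · rw [he]
  · exact (stdNormCdf_mono (by linarith [stdNormInv_strictMonoOn hu hv hlt]))

lemma wangG_lt_iff {p a u : ℝ} (hp : p ∈ Ioo (0:ℝ) 1) (ha : a ∈ Ioo (0:ℝ) 1)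
    (hu : u ∈ Ioo (0:ℝ) 1) :
    a < wangG p u ↔ stdNormCdf (stdNormInv a - stdNormInv p) < u := by
  rw [wangG]
  constructor
  · intro h
    have h1 : stdNormCdf (stdNormInv a) < stdNormCdf (stdNormInv u + stdNormInv p) := by
      rwa [stdNormCdf_stdNormInv ha]
    have h2 : stdNormInv a < stdNormInv u + stdNormInv p := stdNormCdf_strictMono.lt_iff_lt.mp h1
    have h3 : stdNormCdf (stdNormInv a - stdNormInv p) < stdNormCdf (stdNormInv u) :=
      stdNormCdf_strictMono (by linarith)
    rwa [stdNormCdf_stdNormInv hu] at h3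
  · intro h
    have h1 : stdNormCdf (stdNormInv a - stdNormInv p) < stdNormCdf (stdNormInv u) := by
      rwa [stdNormCdf_stdNormInv hu]
    have h2 : stdNormInv a - stdNormInv p < stdNormInv u := stdNormCdf_strictMono.lt_iff_lt.mp h1
    have h3 : stdNormCdf (stdNormInv a) < stdNormCdf (stdNormInv u + stdNormInv p) :=
      stdNormCdf_strictMono (by linarith)
    rwa [stdNormCdf_stdNormInv ha] at h3

lemma wangG_one_sub {p u : ℝ} (hp : p ∈ Ioo (0:ℝ) 1) (hu : u ∈ Ioo (0:ℝ) 1) :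
    wangG p (1 - u) = 1 - wangG (1 - p) u := by
  have h1p : (1:ℝ) - p ∈ Ioo (0:ℝ) 1 := ⟨by linarith [hp.2], by linarith [hp.1]⟩
  rw [wangG, wangG, stdNormInv_one_sub hu, stdNormInv_one_sub hp,
    show -stdNormInv u + stdNormInv p = -(stdNormInv u + -stdNormInv p) by ring,
    stdNormCdf_neg]

lemma wangG_of_one_sub {p a : ℝ} (hp : p ∈ Ioo (0:ℝ) 1) (ha : a ∈ Ioo (0:ℝ) 1) :
    wangG p (1 - a) = 1 - stdNormCdf (stdNormInv a - stdNormInv p) := by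
  rw [wangG_one_sub hp ha, wangG, stdNormInv_one_sub hp, sub_eq_add_neg]
  ring

end CMWTPhi

section CMWTPhi2
open Real

lemma wangG_le_iff {p a u : ℝ} (hp : p ∈ Ioo (0:ℝ) 1) (ha : a ∈ Ioo (0:ℝ) 1)
    (hu : u ∈ Ioo (0:ℝ) 1) :
    a ≤ wangG p u ↔ stdNormCdf (stdNormInv a - stdNormInv p) ≤ u := by
  have e1 : a ≤ wangG p u ↔ stdNormInv a ≤ stdNormInv u + stdNormInv p := by
    conv_lhs => rw [wangG, ← stdNormCdf_stdNormInv ha]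
    exact stdNormCdf_strictMono.le_iff_le
  have e2 : stdNormCdf (stdNormInv a - stdNormInv p) ≤ u ↔
      stdNormInv a - stdNormInv p ≤ stdNormInv u := by
    conv_lhs => rw [← stdNormCdf_stdNormInv hu]
    exact stdNormCdf_strictMono.le_iff_le
  rw [e1, e2]
  constructor <;> intro <;> linarith

end CMWTPhi2

lemma wangG_strictMonoOn (p : ℝ) : StrictMonoOn (wangG p) (Ioo (0:ℝ) 1) := by
  intro u hu v hv huv
  exact stdNormCdf_strictMono (by linarith [stdNormInv_strictMonoOn hu hv huv])
section CMWTReflect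
open Filter Topology

variable {Ω : Type*} [MeasurableSpace Ω]

lemma leftInv_one_sub_eq (P : Measure Ω) [IsProbabilityMeasure P] {X : Ω → ℝ}
    (hX : Measurable X) {m : ℝ}
    (hsym : ∀ x : ℝ, P {ω | X ω ≤ m - x} = P {ω | m + x ≤ X ω})
    {u : ℝ} (hu : u ∈ Ioo (0:ℝ) 1) :
    leftInv (rvCdf P X) (1 - u) = 2 * m - rightInv (rvCdf P X) u := by
  set F := rvCdf P X with hF
  set G : ℝ → ℝ := fun y => (P {ω | X ω < y}).toReal with hG
  -- (a) the reflection identity for distribution functions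
  have hkey : ∀ y : ℝ, 1 - F (2 * m - y) = G y := by
    intro y
    have h1 : F (2 * m - y) = (P {ω | m + (y - m) ≤ X ω}).toReal := by
      rw [hF, rvCdf, ← hsym (y - m)]
      congr 2
      ext ω
      constructor <;> intro h <;> simp only [mem_setOf_eq] at * <;> linarith
    have h2 : {ω | m + (y - m) ≤ X ω} = {ω | y ≤ X ω} := by
      ext ω; constructor <;> intro h <;> simp only [mem_setOf_eq] at * <;> linarith
    have h3 : {ω | X ω < y} = {ω | y ≤ X ω}ᶜ := by
      ext ω; simp [not_le]
    have hms : MeasurableSet {ω | y ≤ X ω} := measurableSet_le measurable_const hX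
    have hsum : P {ω | y ≤ X ω} + P {ω | X ω < y} = 1 := by
      rw [h3, measure_add_measure_compl hms, measure_univ]
    have hsum' : (P {ω | y ≤ X ω}).toReal + (P {ω | X ω < y}).toReal = 1 := by
      rw [← ENNReal.toReal_add (measure_ne_top _ _) (measure_ne_top _ _), hsum,
        ENNReal.toReal_one]
    rw [h1, h2, hG]
    linarith
  -- (b) sSup of the G-sublevel set equals sSup of the F-sublevel set
  set A := {y : ℝ | F y ≤ u} with hA
  set AG := {y : ℝ | G y ≤ u} with hAG
  have hGF : ∀ y, G y ≤ F y := fun y =>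
    ENNReal.toReal_mono (measure_ne_top _ _)
      (measure_mono fun ω (hω : X ω < y) => le_of_lt hω)
  have hGmono : Monotone G := fun y z hyz =>
    ENNReal.toReal_mono (measure_ne_top _ _)
      (measure_mono fun ω (hω : X ω < y) => lt_of_lt_of_le hω hyz)
  have hsub : A ⊆ AG := fun y hy => le_trans (hGF y) hy
  have hAne : A.Nonempty := by
    obtain ⟨z, hz⟩ := exists_rvCdf_lt P hX hu.1
    exact ⟨z, hz.le⟩
  have hAGne : AG.Nonempty := hAne.mono hsub
  obtain ⟨z, hz⟩ := exists_lt_rvCdf P hX hu.2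
  have hAGbdd : BddAbove AG := by
    refine ⟨z + 1, fun y hy => ?_⟩
    by_contra hc
    push_neg at hc
    have h1 : F z ≤ F (y - 1) := rvCdf_mono P X (by linarith)
    have h2 : F (y - 1) ≤ G y :=
      ENNReal.toReal_mono (measure_ne_top _ _)
        (measure_mono fun ω (hω : X ω ≤ y - 1) => by
          simp only [mem_setOf_eq]; linarith)
    have : F z ≤ u := le_trans h1 (le_trans h2 hy)
    linarith
  have hAbdd : BddAbove A := hAGbdd.mono hsub
  have hsup_eq : sSup AG = sSup A := by
    refine le_antisymm (csSup_le hAGne fun y hy => ?_) (csSup_le_csSup hAGbdd hAne hsub)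
    by_contra hc
    push_neg at hc
    obtain ⟨y', hy'1, hy'2⟩ := exists_between hc
    have hFy' : F y' ≤ G y := ENNReal.toReal_mono (measure_ne_top _ _)
      (measure_mono fun ω (hω : X ω ≤ y') => by
        simp only [mem_setOf_eq]; linarith)
    have : y' ∈ A := le_trans hFy' hy
    exact absurd (le_csSup hAbdd this) (not_le.mpr hy'1)
  -- (c) compute the left inverse
  have hS : {x : ℝ | 1 - u ≤ F x} = {x : ℝ | 2 * m - x ∈ AG} := by
    ext x
    simp only [mem_setOf_eq, hAG]
    have := hkey (2 * m - x)
    rw [show 2 * m - (2 * m - x) = x by ring] at this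
    constructor <;> intro h <;> linarith
  set b := sSup AG with hb
  have hdown : ∀ y y' : ℝ, y' ≤ y → y ∈ AG → y' ∈ AG :=
    fun y y' hle hy => le_trans (hGmono hle) hy
  have hmem_ray : ∀ x : ℝ, 2 * m - b < x → x ∈ {x : ℝ | 1 - u ≤ F x} := by
    intro x hx
    rw [hS]
    obtain ⟨y, hy, hlt⟩ := exists_lt_of_lt_csSup hAGne (show 2 * m - x < b by linarith)
    exact hdown y (2 * m - x) hlt.le hy
  have hlb : ∀ x ∈ {x : ℝ | 1 - u ≤ F x}, 2 * m - b ≤ x := by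
    intro x hx
    rw [hS] at hx
    have := le_csSup hAGbdd hx
    linarith
  have : leftInv F (1 - u) = 2 * m - b := by
    rw [leftInv]
    refine le_antisymm ?_ (le_csInf ⟨2 * m - b + 1, hmem_ray _ (by linarith)⟩ hlb)
    by_contra hc
    push_neg at hc
    obtain ⟨x, hx1, hx2⟩ := exists_between hc
    have hxmem := hmem_ray x hx1
    have : sInf {x : ℝ | 1 - u ≤ F x} ≤ x := csInf_le ⟨2 * m - b, hlb⟩ hxmem
    linarith
  rw [this, hsup_eq]
  rfl

lemma leftInv_le_rightInv (P : Measure Ω) [IsProbabilityMeasure P] {X : Ω → ℝ}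
    (hX : Measurable X) {u : ℝ} (hu : u ∈ Ioo (0:ℝ) 1) :
    leftInv (rvCdf P X) u ≤ rightInv (rvCdf P X) u := by
  by_contra hc
  push_neg at hc
  obtain ⟨c, hc1, hc2⟩ := exists_between hc
  have h1 : rvCdf P X c < u := (lt_leftInv_iff P hX hu).mp hc2
  obtain ⟨z, hz⟩ := exists_lt_rvCdf P hX hu.2
  have hbddA : BddAbove {y : ℝ | rvCdf P X y ≤ u} := by
    refine ⟨z, fun y hy => ?_⟩
    by_contra hzy
    push_neg at hzy
    exact absurd (le_trans (rvCdf_mono P X hzy.le) hy) (not_le.mpr hz)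
  exact absurd (le_csSup hbddA h1.le) (not_le.mpr hc1)

lemma rightInv_le_leftInv_of_lt (P : Measure Ω) [IsProbabilityMeasure P] {X : Ω → ℝ}
    (hX : Measurable X) {u v : ℝ} (hu : u ∈ Ioo (0:ℝ) 1) (hv : v ∈ Ioo (0:ℝ) 1)
    (huv : u < v) : rightInv (rvCdf P X) u ≤ leftInv (rvCdf P X) v := by
  have hne : {y : ℝ | rvCdf P X y ≤ u}.Nonempty := by
    obtain ⟨z, hz⟩ := exists_rvCdf_lt P hX hu.1
    exact ⟨z, hz.le⟩
  refine csSup_le hne fun y hy => ?_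
  have hvne : {z : ℝ | v ≤ rvCdf P X z}.Nonempty :=
    (exists_lt_rvCdf P hX hv.2).imp fun z hz => hz.le
  refine le_csInf hvne fun z hz => ?_
  by_contra hc
  push_neg at hc
  have := rvCdf_mono P X hc.le
  simp only [mem_setOf_eq] at hy hz
  linarith

lemma countable_leftInv_ne_rightInv (P : Measure Ω) [IsProbabilityMeasure P] {X : Ω → ℝ}
    (hX : Measurable X) :
    {u : ℝ | u ∈ Ioo (0:ℝ) 1 ∧
      leftInv (rvCdf P X) u ≠ rightInv (rvCdf P X) u}.Countable := by
  set S := {u : ℝ | u ∈ Ioo (0:ℝ) 1 ∧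
    leftInv (rvCdf P X) u ≠ rightInv (rvCdf P X) u} with hS
  have hstrict : ∀ u ∈ S, leftInv (rvCdf P X) u < rightInv (rvCdf P X) u :=
    fun u hu => lt_of_le_of_ne (leftInv_le_rightInv P hX hu.1) hu.2
  have hchoice : ∀ u : ℝ, ∃ q : ℚ, u ∈ S →
      leftInv (rvCdf P X) u < (q:ℝ) ∧ (q:ℝ) < rightInv (rvCdf P X) u := by
    intro u
    by_cases hu : u ∈ S
    · obtain ⟨q, h1, h2⟩ := exists_rat_btwn (hstrict u hu)
      exact ⟨q, fun _ => ⟨h1, h2⟩⟩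
    · exact ⟨0, fun h => absurd h hu⟩
  choose f hf using hchoice
  have hinj : InjOn (fun u => Encodable.encode (f u)) S := by
    intro u hu v hv hne
    have hfe : f u = f v := Encodable.encode_injective hne
    by_contra hne2
    rcases lt_or_gt_of_ne hne2 with h | h
    · have h1 := (hf u hu).2
      have h2 := (hf v hv).1
      have h3 := rightInv_le_leftInv_of_lt P hX hu.1 hv.1 h
      rw [hfe] at h1
      linarith
    · have h1 := (hf v hv).2
      have h2 := (hf u hu).1
      have h3 := rightInv_le_leftInv_of_lt P hX hv.1 hu.1 h
      rw [hfe] at h2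
      linarith
  exact Set.countable_iff_exists_injOn.mpr ⟨_, hinj⟩

lemma reflection_off_countable (P : Measure Ω) [IsProbabilityMeasure P] {X : Ω → ℝ}
    (hX : Measurable X) {m : ℝ}
    (hsym : ∀ x : ℝ, P {ω | X ω ≤ m - x} = P {ω | m + x ≤ X ω}) :
    ∃ N : Set ℝ, N.Countable ∧ ∀ u ∈ Ioo (0:ℝ) 1, u ∉ N →
      leftInv (rvCdf P X) (1 - u) = 2 * m - leftInv (rvCdf P X) u := by
  refine ⟨_, countable_leftInv_ne_rightInv P hX, fun u hu huN => ?_⟩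
  have heq : leftInv (rvCdf P X) u = rightInv (rvCdf P X) u := by
    by_contra hne
    exact huN ⟨hu, hne⟩
  rw [leftInv_one_sub_eq P hX hsym hu, heq]

end CMWTReflect
section CMWTKey
open Filter Topology

variable {Ω : Type*} [MeasurableSpace Ω]

lemma key_survIoo (w : ℝ → ℝ) (hw : MonotoneOn w (Ioo 0 1)) {p x : ℝ}
    (hp : p ∈ Ioo (0:ℝ) 1) (hS : survIoo w x ∈ Ioo (0:ℝ) 1) :
    survIoo (fun u => w (wangG p u)) x = wangG p (survIoo w x) := by
  obtain ⟨a, ha, h1, h2⟩ := upset_sandwich hw x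
  have hsv : survIoo w x = 1 - a := survIoo_eq_of_sandwich ha h1 h2
  have haI : a ∈ Ioo (0:ℝ) 1 := by
    constructor
    · rcases eq_or_lt_of_le ha.1 with he | hlt
      · exfalso
        rw [hsv, ← he] at hS
        have := hS.2
        linarith
      · exact hlt
    · rcases eq_or_lt_of_le ha.2 with he | hlt
      · exfalso
        rw [hsv, he] at hS
        have := hS.1
        linarith
      · exact hlt
  set b := stdNormCdf (stdNormInv a - stdNormInv p) with hb
  have hbI : b ∈ Ioo (0:ℝ) 1 := ⟨stdNormCdf_pos _, stdNormCdf_lt_one _⟩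
  have h1' : Ioo b 1 ⊆ {u : ℝ | u ∈ Ioo (0:ℝ) 1 ∧ x < w (wangG p u)} := by
    intro u hu
    have huI : u ∈ Ioo (0:ℝ) 1 := ⟨lt_trans hbI.1 hu.1, hu.2⟩
    have hgt : a < wangG p u := (wangG_lt_iff hp haI huI).mpr hu.1
    exact ⟨huI, (h1 ⟨hgt, (wangG_mem p u).2⟩).2⟩
  have h2' : {u : ℝ | u ∈ Ioo (0:ℝ) 1 ∧ x < w (wangG p u)} ⊆ Ico b 1 := by
    intro u hu
    refine ⟨?_, hu.1.2⟩
    have hge : a ≤ wangG p u := (h2 ⟨wangG_mem p u, hu.2⟩).1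
    exact (wangG_le_iff hp haI hu.1).mp hge
  rw [survIoo_eq_of_sandwich ⟨hbI.1.le, hbI.2.le⟩ h1' h2', hsv,
    wangG_of_one_sub hp haI]

lemma nondeg_surv (S : ℝ → ℝ) (hanti : Antitone S) (hS0 : ∀ x, 0 ≤ S x)
    (hS1 : ∀ x, S x ≤ 1) {p : ℝ} (hp : p ∈ Ioo (0:ℝ) 1)
    (h1 : IntegrableOn (fun x => 1 - wangG p (S x)) (Iio (0:ℝ)) volume)
    (h2 : IntegrableOn (fun x => wangG p (S x)) (Ioi (0:ℝ)) volume) :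
    ∀ x : ℝ, x ≠ 0 → S x ∈ Ioo (0:ℝ) 1 := by
  have hA : ∀ x : ℝ, 0 < x → S x ≠ 0 := by
    intro x hx h0
    have hint : IntegrableOn (fun y => wangG p (S y)) (Ici x) volume :=
      h2.mono_set fun y hy => lt_of_lt_of_le hx hy
    have hconst : IntegrableOn (fun _ : ℝ => p) (Ici x) volume := by
      refine hint.congr_fun (fun y hy => ?_) measurableSet_Ici
      have hSy : S y = 0 := le_antisymm (h0 ▸ hanti hy) (hS0 y)
      beta_reduce; rw [hSy, wangG_zero hp]
    rw [integrableOn_const_iff] at hconst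
    rcases hconst with h | h
    · exact absurd (enorm_eq_zero.mp h) (ne_of_gt hp.1)
    · rw [Real.volume_Ici] at h
      exact absurd h (lt_irrefl _)
  have hB : ∀ x : ℝ, x < 0 → S x ≠ 1 := by
    intro x hx h0
    have hint : IntegrableOn (fun y => 1 - wangG p (S y)) (Iic x) volume :=
      h1.mono_set fun y hy => lt_of_le_of_lt hy hx
    have hconst : IntegrableOn (fun _ : ℝ => 1 - p) (Iic x) volume := by
      refine hint.congr_fun (fun y hy => ?_) measurableSet_Iic
      have hSy : S y = 1 := le_antisymm (hS1 y) (h0 ▸ hanti hy)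
      beta_reduce; rw [hSy, wangG_one hp]
    rw [integrableOn_const_iff] at hconst
    rcases hconst with h | h
    · have := hp.2; linarith [sub_eq_zero.mp (enorm_eq_zero.mp h)]
    · rw [Real.volume_Iic] at h
      exact absurd h (lt_irrefl _)
  intro x hx
  rcases lt_or_gt_of_ne hx with hneg | hpos
  · constructor
    · have h1' := hA 1 one_pos
      have h2' : S 1 ≤ S x := hanti (by linarith)
      have : 0 < S 1 := lt_of_le_of_ne (hS0 1) (Ne.symm h1')
      linarith
    · exact lt_of_le_of_ne (hS1 x) (hB x hneg)
  · constructor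
    · exact lt_of_le_of_ne (hS0 x) (Ne.symm (hA x hpos))
    · have hm1 := hB (-1) (by norm_num)
      have h2' : S x ≤ S (-1) := hanti (by linarith)
      have : S (-1) < 1 := lt_of_le_of_ne (hS1 (-1)) hm1
      linarith

lemma survIoo_leftInv (P : Measure Ω) [IsProbabilityMeasure P] {X : Ω → ℝ}
    (hX : Measurable X) (x : ℝ) :
    survIoo (leftInv (rvCdf P X)) x = rvSurv P X x := by
  have hset : {u : ℝ | u ∈ Ioo (0:ℝ) 1 ∧ x < leftInv (rvCdf P X) u} =
      Ioo (rvCdf P X x) 1 := by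
    ext u
    constructor
    · rintro ⟨hu, hlt⟩
      exact ⟨(lt_leftInv_iff P hX hu).mp hlt, hu.2⟩
    · intro hu
      have huI : u ∈ Ioo (0:ℝ) 1 := ⟨lt_of_le_of_lt (rvCdf_nonneg P X x) hu.1, hu.2⟩
      exact ⟨huI, (lt_leftInv_iff P hX huI).mpr hu.1⟩
  rw [survIoo, hset, Real.volume_Ioo,
    ENNReal.toReal_ofReal (sub_nonneg.mpr (rvCdf_le_one P X x)),
    rvSurv_eq_one_sub P hX]

lemma rvSurv_cmSum_eq (P : Measure Ω) [IsProbabilityMeasure P]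
    (X₁ X₂ U : Ω → ℝ) (hU : IsUniform01 P U)
    {ht : ℝ → ℝ} (hmono : MonotoneOn ht (Ioo 0 1)) {C : Set ℝ} (hC : C.Countable)
    (heq : ∀ u ∈ Ioo (0:ℝ) 1, u ∉ C →
      leftInv (rvCdf P X₁) u + leftInv (rvCdf P X₂) (1 - u) = ht u)
    (x : ℝ) : rvSurv P (cmSum P X₁ X₂ U) x = survIoo ht x := by
  set h : ℝ → ℝ := fun u => leftInv (rvCdf P X₁) u + leftInv (rvCdf P X₂) (1 - u) with hh
  set A := {u : ℝ | u ∈ Ioo (0:ℝ) 1 ∧ x < h u} with hA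
  set At := {u : ℝ | u ∈ Ioo (0:ℝ) 1 ∧ x < ht u} with hAt
  have hAt_meas : MeasurableSet At := upset_measurable hmono x
  have hC0 : volume C = 0 := hC.measure_zero volume
  have hAAt : volume A = volume At := by
    refine measure_congr ?_
    rw [Filter.eventuallyEq_set]
    filter_upwards [measure_eq_zero_iff_ae_notMem.mp hC0] with u hu
    constructor
    · intro h'
      exact ⟨h'.1, by rw [← heq u h'.1 hu]; exact h'.2⟩
    · intro h'
      exact ⟨h'.1, by rw [hh]; simp only []; rw [heq u h'.1 hu]; exact h'.2⟩
  have hUm := hU.1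
  have hmap := hU.2
  have hU01 : P (U ⁻¹' (Ioo (0:ℝ) 1)ᶜ) = 0 := by
    rw [← Measure.map_apply hUm measurableSet_Ioo.compl, hmap,
      Measure.restrict_apply' measurableSet_Icc]
    have hpair : (Ioo (0:ℝ) 1)ᶜ ∩ Icc 0 1 = {0, 1} := by
      ext y
      simp only [mem_inter_iff, mem_compl_iff, mem_Ioo, mem_Icc, mem_insert_iff,
        mem_singleton_iff, not_and, not_lt]
      constructor
      · rintro ⟨hno, h0, h1⟩
        rcases eq_or_lt_of_le h0 with he | hpos
        · exact Or.inl he.symm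
        · exact Or.inr (le_antisymm h1 (hno hpos))
      · rintro (rfl | rfl)
        · exact ⟨fun h => absurd h (lt_irrefl _), le_refl _, zero_le_one⟩
        · exact ⟨fun _ => le_refl _, zero_le_one, le_refl _⟩
    rw [hpair]
    exact (Set.countable_insert.mpr (Set.countable_singleton 1)).measure_zero volume
  have hA_meas : MeasurableSet A := by
    have hdec : A = (At \ C) ∪ (A ∩ C) := by
      ext u
      constructor
      · intro hu
        by_cases hc : u ∈ C
        · exact Or.inr ⟨hu, hc⟩
        · exact Or.inl ⟨⟨hu.1, by rw [← heq u hu.1 hc]; exact hu.2⟩, hc⟩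
      · rintro (⟨hu, hc⟩ | ⟨hu, _⟩)
        · exact ⟨hu.1, by rw [hh]; simp only []; rw [heq u hu.1 hc]; exact hu.2⟩
        · exact hu
    rw [hdec]
    exact (hAt_meas.diff hC.measurableSet).union
      ((hC.mono inter_subset_right).measurableSet)
  have hsetP : {ω | x < cmSum P X₁ X₂ U ω} =ᵐ[P] U ⁻¹' A := by
    rw [Filter.eventuallyEq_set]
    filter_upwards [measure_eq_zero_iff_ae_notMem.mp hU01] with ω hω
    have hUω : U ω ∈ Ioo (0:ℝ) 1 := by
      by_contra hc
      exact hω hc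
    have hcm : cmSum P X₁ X₂ U ω = h (U ω) := rfl
    simp only [mem_setOf_eq, mem_preimage, hA, hcm]
    exact ⟨fun hlt => ⟨hUω, hlt⟩, fun hlt => hlt.2⟩
  have hPA : P (U ⁻¹' A) = volume A := by
    rw [← Measure.map_apply hUm hA_meas, hmap, Measure.restrict_apply' measurableSet_Icc,
      inter_eq_self_of_subset_left (fun u hu => Ioo_subset_Icc_self hu.1)]
  rw [rvSurv]
  rw [measure_congr hsetP, hPA, hAAt]
  rfl

end CMWTKey

/-- Wang transform risk measure decomposition of the counter-monotonic sum. -/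
theorem cm_sum_WT
    (P : Measure Ω) [IsProbabilityMeasure P]
    (X₁ X₂ U : Ω → ℝ) (hX₁ : Measurable X₁) (hX₂ : Measurable X₂)
    (hU : IsUniform01 P U)
    (hsym₁ : IsSymmetricRV P X₁) (hsym₂ : IsSymmetricRV P X₂)
    (hreg₁ : CdfRegular P X₁) (hreg₂ : CdfRegular P X₂)
    (hdisp : DispLE P X₂ X₁)
    (p : ℝ) (hp : p ∈ Ioo (0:ℝ) 1)
    (hfinS : RhoFinite P (wangG p) (cmSum P X₁ X₂ U))
    (hfin₁ : RhoFinite P (wangG p) X₁)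
    (hfin₂ : RhoFinite P (wangG (1 - p)) X₂) :
    WT P (cmSum P X₁ X₂ U) p = WT P X₁ p + WT P X₂ (1 - p)     := by
  classical
  obtain ⟨m₂, hsym₂'⟩ := hsym₂
  obtain ⟨N, hNc, hNrefl⟩ := reflection_off_countable P hX₂ hsym₂'
  have hp1 : (1:ℝ) - p ∈ Ioo (0:ℝ) 1 := ⟨by linarith [hp.2], by linarith [hp.1]⟩
  set f₁ : ℝ → ℝ := leftInv (rvCdf P X₁) with hf₁
  set f₂ : ℝ → ℝ := leftInv (rvCdf P X₂) with hf₂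
  set ht : ℝ → ℝ := fun u => f₁ u + (2 * m₂ - f₂ u) with hht
  have hf₁mono : MonotoneOn f₁ (Ioo (0:ℝ) 1) := leftInv_monotoneOn P hX₁
  have hf₂mono : MonotoneOn f₂ (Ioo (0:ℝ) 1) := leftInv_monotoneOn P hX₂
  have hhtmono : MonotoneOn ht (Ioo (0:ℝ) 1) := by
    intro u hu v hv huv
    have hd := hdisp v u hu.1 huv hv.2
    simp only [hht]
    simp only [hf₁, hf₂] at *
    linarith
  have heqC : ∀ u ∈ Ioo (0:ℝ) 1, u ∉ N →
      leftInv (rvCdf P X₁) u + leftInv (rvCdf P X₂) (1 - u) = ht u := by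
    intro u hu hun
    have hr := hNrefl u hu hun
    simp only [hht, hf₁, hf₂]
    linarith
  have hsurvS : ∀ x, rvSurv P (cmSum P X₁ X₂ U) x = survIoo ht x :=
    rvSurv_cmSum_eq P X₁ X₂ U hU hhtmono hNc heqC
  obtain ⟨hfS1, hfS2⟩ := hfinS
  obtain ⟨hf11, hf12⟩ := hfin₁
  obtain ⟨hf21, hf22⟩ := hfin₂
  have hndS : ∀ x : ℝ, x ≠ 0 → rvSurv P (cmSum P X₁ X₂ U) x ∈ Ioo (0:ℝ) 1 :=
    nondeg_surv _ (rvSurv_antitone P _) (rvSurv_nonneg P _) (rvSurv_le_one P _) hp hfS1 hfS2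
  have hnd1 : ∀ x : ℝ, x ≠ 0 → rvSurv P X₁ x ∈ Ioo (0:ℝ) 1 :=
    nondeg_surv _ (rvSurv_antitone P _) (rvSurv_nonneg P _) (rvSurv_le_one P _) hp hf11 hf12
  have hnd2 : ∀ x : ℝ, x ≠ 0 → rvSurv P X₂ x ∈ Ioo (0:ℝ) 1 :=
    nondeg_surv _ (rvSurv_antitone P _) (rvSurv_nonneg P _) (rvSurv_le_one P _) hp1 hf21 hf22
  set w0 : ℝ → ℝ := fun u => ht (wangG p u) with hw0
  set w1 : ℝ → ℝ := fun u => f₁ (wangG p u) with hw1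
  set w2 : ℝ → ℝ := fun u => f₂ (wangG (1 - p) u) with hw2
  have hw0mono : MonotoneOn w0 (Ioo (0:ℝ) 1) := fun u hu v hv huv =>
    hhtmono (wangG_mem p u) (wangG_mem p v) (wangG_monotoneOn p hu hv huv)
  have hw1mono : MonotoneOn w1 (Ioo (0:ℝ) 1) := fun u hu v hv huv =>
    hf₁mono (wangG_mem p u) (wangG_mem p v) (wangG_monotoneOn p hu hv huv)
  have hw2mono : MonotoneOn w2 (Ioo (0:ℝ) 1) := fun u hu v hv huv =>
    hf₂mono (wangG_mem (1-p) u) (wangG_mem (1-p) v) (wangG_monotoneOn (1-p) hu hv huv)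
  have hkeyS : ∀ x : ℝ, x ≠ 0 →
      survIoo w0 x = wangG p (rvSurv P (cmSum P X₁ X₂ U) x) := by
    intro x hx
    rw [hsurvS x]
    exact key_survIoo ht hhtmono hp (by rw [← hsurvS x]; exact hndS x hx)
  have hkey1 : ∀ x : ℝ, x ≠ 0 → survIoo w1 x = wangG p (rvSurv P X₁ x) := by
    intro x hx
    rw [← survIoo_leftInv P hX₁ x]
    exact key_survIoo f₁ hf₁mono hp
      (by rw [survIoo_leftInv P hX₁ x]; exact hnd1 x hx)
  have hkey2 : ∀ x : ℝ, x ≠ 0 → survIoo w2 x = wangG (1-p) (rvSurv P X₂ x) := by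
    intro x hx
    rw [← survIoo_leftInv P hX₂ x]
    exact key_survIoo f₂ hf₂mono hp1
      (by rw [survIoo_leftInv P hX₂ x]; exact hnd2 x hx)
  -- transfer the integrability hypotheses
  have hS1' : IntegrableOn (fun x => 1 - survIoo w0 x) (Iio (0:ℝ)) volume :=
    hfS1.congr_fun (fun x hx => by rw [hkeyS x (ne_of_lt hx)]) measurableSet_Iio
  have hS2' : IntegrableOn (fun x => survIoo w0 x) (Ioi (0:ℝ)) volume :=
    hfS2.congr_fun (fun x hx => (hkeyS x (ne_of_gt hx)).symm) measurableSet_Ioi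
  have h11' : IntegrableOn (fun x => 1 - survIoo w1 x) (Iio (0:ℝ)) volume :=
    hf11.congr_fun (fun x hx => by rw [hkey1 x (ne_of_lt hx)]) measurableSet_Iio
  have h12' : IntegrableOn (fun x => survIoo w1 x) (Ioi (0:ℝ)) volume :=
    hf12.congr_fun (fun x hx => (hkey1 x (ne_of_gt hx)).symm) measurableSet_Ioi
  have h21' : IntegrableOn (fun x => 1 - survIoo w2 x) (Iio (0:ℝ)) volume :=
    hf21.congr_fun (fun x hx => by rw [hkey2 x (ne_of_lt hx)]) measurableSet_Iio
  have h22' : IntegrableOn (fun x => survIoo w2 x) (Ioi (0:ℝ)) volume :=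
    hf22.congr_fun (fun x hx => (hkey2 x (ne_of_gt hx)).symm) measurableSet_Ioi
  obtain ⟨hint0, hval0⟩ := monotoneOn_integral_eq w0 hw0mono hS1' hS2'
  obtain ⟨hint1, hval1⟩ := monotoneOn_integral_eq w1 hw1mono h11' h12'
  obtain ⟨hint2, hval2⟩ := monotoneOn_integral_eq w2 hw2mono h21' h22'
  -- identify the three risk measures with integrals over (0,1)
  have hrhoS : WT P (cmSum P X₁ X₂ U) p = ∫ u in Ioo (0:ℝ) 1, w0 u := by
    rw [WT, rho, hval0]
    have e1 : ∫ x in Iio (0:ℝ), (1 - wangG p (rvSurv P (cmSum P X₁ X₂ U) x)) =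
        ∫ x in Iio (0:ℝ), (1 - survIoo w0 x) :=
      setIntegral_congr_fun measurableSet_Iio
        (fun x hx => by rw [hkeyS x (ne_of_lt hx)])
    have e2 : ∫ x in Ioi (0:ℝ), wangG p (rvSurv P (cmSum P X₁ X₂ U) x) =
        ∫ x in Ioi (0:ℝ), survIoo w0 x :=
      setIntegral_congr_fun measurableSet_Ioi
        (fun x hx => by rw [hkeyS x (ne_of_gt hx)])
    rw [e1, e2]
  have hrho1 : WT P X₁ p = ∫ u in Ioo (0:ℝ) 1, w1 u := by
    rw [WT, rho, hval1]
    have e1 : ∫ x in Iio (0:ℝ), (1 - wangG p (rvSurv P X₁ x)) =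
        ∫ x in Iio (0:ℝ), (1 - survIoo w1 x) :=
      setIntegral_congr_fun measurableSet_Iio
        (fun x hx => by rw [hkey1 x (ne_of_lt hx)])
    have e2 : ∫ x in Ioi (0:ℝ), wangG p (rvSurv P X₁ x) =
        ∫ x in Ioi (0:ℝ), survIoo w1 x :=
      setIntegral_congr_fun measurableSet_Ioi
        (fun x hx => by rw [hkey1 x (ne_of_gt hx)])
    rw [e1, e2]
  have hrho2 : WT P X₂ (1 - p) = ∫ u in Ioo (0:ℝ) 1, w2 u := by
    rw [WT, rho, hval2]
    have e1 : ∫ x in Iio (0:ℝ), (1 - wangG (1-p) (rvSurv P X₂ x)) =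
        ∫ x in Iio (0:ℝ), (1 - survIoo w2 x) :=
      setIntegral_congr_fun measurableSet_Iio
        (fun x hx => by rw [hkey2 x (ne_of_lt hx)])
    have e2 : ∫ x in Ioi (0:ℝ), wangG (1-p) (rvSurv P X₂ x) =
        ∫ x in Ioi (0:ℝ), survIoo w2 x :=
      setIntegral_congr_fun measurableSet_Ioi
        (fun x hx => by rw [hkey2 x (ne_of_gt hx)])
    rw [e1, e2]
  -- split the integral of w0
  have hint2' : IntegrableOn (fun u => 2 * m₂ - f₂ (wangG p u)) (Ioo (0:ℝ) 1) volume := by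
    have hsub := hint0.sub hint1
    refine (hsub : Integrable _ _).congr (Filter.Eventually.of_forall fun u => ?_)
    simp only [hw0, hw1, hht, Pi.sub_apply]
    ring
  have hsplit_int : ∫ u in Ioo (0:ℝ) 1, w0 u =
      (∫ u in Ioo (0:ℝ) 1, w1 u) + ∫ u in Ioo (0:ℝ) 1, (2 * m₂ - f₂ (wangG p u)) := by
    have e : ∫ u in Ioo (0:ℝ) 1, w0 u =
        ∫ u in Ioo (0:ℝ) 1, (w1 u + (2 * m₂ - f₂ (wangG p u))) :=
      setIntegral_congr_fun measurableSet_Ioo (fun u _ => by simp only [hw0, hw1, hht])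
    rw [e]
    exact integral_add hint1 hint2'
  -- the reflection argument for the second piece
  have hio : ∀ G : ℝ → ℝ, ∫ u in Ioo (0:ℝ) 1, G u = ∫ u in Ioo (0:ℝ) 1, G (1 - u) := by
    intro G
    have h := intervalIntegral.integral_comp_sub_left (a := 0) (b := 1) G 1
    rw [show (1:ℝ)-1 = 0 by norm_num, show (1:ℝ)-0 = 1 by norm_num] at h
    calc ∫ u in Ioo (0:ℝ) 1, G u
        = ∫ u in Ioc (0:ℝ) 1, G u := integral_Ioc_eq_integral_Ioo.symm
      _ = ∫ u in (0:ℝ)..1, G u := (intervalIntegral.integral_of_le zero_le_one).symm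
      _ = ∫ u in (0:ℝ)..1, G (1 - u) := h.symm
      _ = ∫ u in Ioc (0:ℝ) 1, G (1 - u) := intervalIntegral.integral_of_le zero_le_one
      _ = ∫ u in Ioo (0:ℝ) 1, G (1 - u) := integral_Ioc_eq_integral_Ioo
  have hbadc : {u : ℝ | u ∈ Ioo (0:ℝ) 1 ∧ wangG (1-p) u ∈ N}.Countable := by
    obtain ⟨e, he⟩ := Set.countable_iff_exists_injOn.mp hNc
    refine Set.countable_iff_exists_injOn.mpr ⟨fun u => e (wangG (1-p) u), ?_⟩
    intro u hu v hv heq'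
    have h1 := he hu.2 hv.2 heq'
    by_contra hne
    rcases lt_or_gt_of_ne hne with h | h
    · exact absurd h1 (ne_of_lt (wangG_strictMonoOn (1-p) hu.1 hv.1 h))
    · exact absurd h1.symm (ne_of_lt (wangG_strictMonoOn (1-p) hv.1 hu.1 h))
  have hreflect : ∫ u in Ioo (0:ℝ) 1, (2 * m₂ - f₂ (wangG p u)) =
      ∫ u in Ioo (0:ℝ) 1, w2 u := by
    rw [hio (fun u => 2 * m₂ - f₂ (wangG p u))]
    refine setIntegral_congr_ae measurableSet_Ioo ?_
    have hbad0 : volume {u : ℝ | u ∈ Ioo (0:ℝ) 1 ∧ wangG (1-p) u ∈ N} = 0 :=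
      hbadc.measure_zero volume
    filter_upwards [measure_eq_zero_iff_ae_notMem.mp hbad0] with u hu huIoo
    have hknotN : wangG (1-p) u ∉ N := fun hc => hu ⟨huIoo, hc⟩
    have hrefl := hNrefl (wangG (1-p) u) (wangG_mem (1-p) u) hknotN
    have hdual : wangG p (1 - u) = 1 - wangG (1-p) u := wangG_one_sub hp huIoo
    show 2 * m₂ - f₂ (wangG p (1 - u)) = w2 u
    rw [hdual]
    simp only [hw2, hf₂] at *
    rw [hrefl]
    ring
  rw [hrhoS, hsplit_int, hreflect, ← hrho1, ← hrho2]

end
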